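/- The big-step evaluation relation for rewriting strategies is deterministic: if under a context Γ the application of a strategy S to a ground term t evaluates to a result u, and it also evaluates to a result u', then u = u'. -/

import Mathlib

/-- Ground (variable-free) first-order terms over a signature whose symbols
are the elements of `F`. -/
inductive GTerm (F : Type) : Type
  | node : F → List (GTerm F) → GTerm F

/-- First-order terms over symbols `F` and term variables `V`. -/
inductive Tm (F : Type) (V : Type) : Type
  | var : V → Tm F V
  | node : F → List (Tm F V) → Tm F V

/-- `VarIn v t` : the variable `v` occurs in the term `t`. -/
inductive VarIn {F V : Type} (v : V) : Tm F V → Prop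
  | var : VarIn v (.var v)
  | node {f : F} {ts : List (Tm F V)} {t : Tm F V} :
      t ∈ ts → VarIn v t → VarIn v (.node f ts)

/-- Rewriting strategies: identity, failure, a rewrite rule `l → r`
(with `vars r ⊆ vars l`), sequence, left-choice, `one`, `all`,
μ-recursion and strategy variables (from `X`). -/
inductive Strat (F V X : Type) : Type
  | id : Strat F V X
  | fail : Strat F V X
  | rule (l r : Tm F V) (wf : ∀ v, VarIn v r → VarIn v l) : Strat F V X
  | seq (s₁ s₂ : Strat F V X) : Strat F V X
  | choice (s₁ s₂ : Strat F V X) : Strat F V X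
  | one (s : Strat F V X) : Strat F V X
  | all (s : Strat F V X) : Strat F V X
  | mu (x : X) (s : Strat F V X) : Strat F V X
  | var (x : X) : Strat F V X

/-- Application of a (ground) substitution to a term. -/
def substG {F V : Type} (σ : V → GTerm F) : Tm F V → GTerm F
  | .var v => σ v
  | .node f ts => .node f (ts.attach.map (fun t => substG σ t.1))
termination_by t => sizeOf t
decreasing_by
  have := List.sizeOf_lt_of_mem t.2
  simp only [Tm.node.sizeOf_spec]
  omega

/-- Contexts map strategy variables to strategies. -/
abbrev Ctx (F V X : Type) := X → Option (Strat F V X)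

/-- Big-step evaluation judgment `Γ ⊢ [S](t) ⇒ u`; the result `u` is
`some t'` for a ground term `t'`, or `none`, representing `Fail`. -/
inductive Eval {F V X : Type} [DecidableEq X] :
    Ctx F V X → Strat F V X → GTerm F → Option (GTerm F) → Prop
  | id {Γ t} : Eval Γ .id t (some t)
  | fail {Γ t} : Eval Γ .fail t none
  | ruleOk {Γ l r wf} (σ : V → GTerm F) :
      Eval Γ (.rule l r wf) (substG σ l) (some (substG σ r))
  | ruleFail {Γ l r wf t} : (∀ σ : V → GTerm F, substG σ l ≠ t) →
      Eval Γ (.rule l r wf) t none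
  | seqOk {Γ s₁ s₂ t t' u} : Eval Γ s₁ t (some t') → Eval Γ s₂ t' u →
      Eval Γ (.seq s₁ s₂) t u
  | seqFail {Γ s₁ s₂ t} : Eval Γ s₁ t none → Eval Γ (.seq s₁ s₂) t none
  | choiceOk {Γ s₁ s₂ t t'} : Eval Γ s₁ t (some t') →
      Eval Γ (.choice s₁ s₂) t (some t')
  | choiceFail {Γ s₁ s₂ t u} : Eval Γ s₁ t none → Eval Γ s₂ t u →
      Eval Γ (.choice s₁ s₂) t u
  | mu {Γ x s t u} : Eval (Function.update Γ x (some s)) s t u →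
      Eval Γ (.mu x s) t u
  | muvar {Γ x s t u} : Γ x = some s → Eval Γ s t u → Eval Γ (.var x) t u
  | oneOk {Γ s f pre t post t'} :
      (∀ p ∈ pre, Eval Γ s p none) → Eval Γ s t (some t') →
      Eval Γ (.one s) (.node f (pre ++ t :: post))
        (some (.node f (pre ++ t' :: post)))
  | oneFail {Γ s f ts} : (∀ t ∈ ts, Eval Γ s t none) →
      Eval Γ (.one s) (.node f ts) none
  | allOk {Γ s f ts ts'} : ts.length = ts'.length →
      (∀ p ∈ ts.zip ts', Eval Γ s p.1 (some p.2)) →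
      Eval Γ (.all s) (.node f ts) (some (.node f ts'))
  | allFail {Γ s f ts t} : t ∈ ts → Eval Γ s t none →
      Eval Γ (.all s) (.node f ts) none

/-- A strategy `S` is terminating under the context `Γ` if applying it to any
ground term yields some result (a term or `Fail`). -/
def Terminating {F V X : Type} [DecidableEq X] (Γ : Ctx F V X) (S : Strat F V X) : Prop :=
  ∀ t : GTerm F, ∃ u : Option (GTerm F), Eval Γ S t u

/-- the big-step evaluation relation is deterministic. -/
theorem substG_congr {F V : Type} {σ σ' : V → GTerm F} :
    ∀ (t : Tm F V), (∀ v, VarIn v t → σ v = σ' v) → substG σ t = substG σ' t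
  | .var v, h => by simpa [substG] using h v .var
  | .node f ts, h => by
    simp only [substG]
    congr 1
    refine List.map_congr_left (fun x hx => ?_)
    exact substG_congr x.1 (fun v hv => h v (.node x.2 hv))
termination_by t => sizeOf t
decreasing_by
  have := List.sizeOf_lt_of_mem x.2
  simp only [Tm.node.sizeOf_spec]
  omega

theorem substG_agree {F V : Type} {σ σ' : V → GTerm F} :
    ∀ (t : Tm F V), substG σ t = substG σ' t → ∀ v, VarIn v t → σ v = σ' v
  | .var w, h, v, hv => by cases hv; simpa [substG] using h
  | .node f ts, h, v, hv => by
    cases hv with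
    | @node _ _ t' hmem hvin =>
      simp only [substG, GTerm.node.injEq] at h
      have := List.map_inj_left.mp h.2 ⟨t', hmem⟩ (List.mem_attach _ _)
      exact substG_agree t' this v hvin
termination_by t => sizeOf t
decreasing_by
  have := List.sizeOf_lt_of_mem hmem
  simp only [Tm.node.sizeOf_spec]
  omega

theorem append_cons_cases {α : Type} :
    ∀ (a : List α) (x : α) (b : List α) (c : List α) (y : α) (d : List α),
    a ++ x :: b = c ++ y :: d →
    (a = c ∧ x = y ∧ b = d) ∨ x ∈ c ∨ y ∈ a
  | [], x, b, [], y, d, h => by simp_all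
  | [], x, b, z :: c, y, d, h => by
    simp at h; exact Or.inr (Or.inl (h.1 ▸ List.mem_cons_self))
  | z :: a, x, b, [], y, d, h => by
    simp at h; exact Or.inr (Or.inr (h.1 ▸ List.mem_cons_self))
  | z :: a, x, b, w :: c, y, d, h => by
    simp only [List.cons_append, List.cons.injEq] at h
    rcases append_cons_cases a x b c y d h.2 with ⟨h1, h2, h3⟩ | hx | hy
    · exact Or.inl ⟨by rw [h.1, h1], h2, h3⟩
    · exact Or.inr (Or.inl (List.mem_cons_of_mem _ hx))
    · exact Or.inr (Or.inr (List.mem_cons_of_mem _ hy))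

theorem mem_zip_of_mem_left {α β : Type} :
    ∀ {ts : List α} {ts' : List β} {t : α}, t ∈ ts → ts.length = ts'.length →
    ∃ b, (t, b) ∈ ts.zip ts'
  | a :: ts, b :: ts', t, hm, hl => by
    rcases List.mem_cons.mp hm with rfl | hm
    · exact ⟨b, List.mem_cons_self⟩
    · obtain ⟨w, hw⟩ := mem_zip_of_mem_left hm (by simpa using hl)
      exact ⟨w, List.mem_cons_of_mem _ hw⟩
  | a :: ts, [], t, hm, hl => by simp at hl
  | [], _, t, hm, hl => by simp at hm

theorem eval_rule_inv {F V X : Type} [DecidableEq X]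
    {Γ : Ctx F V X} {l r : Tm F V} {wf} {t : GTerm F} {u : Option (GTerm F)}
    (h : Eval Γ (.rule l r wf) t u) :
    (∃ σ : V → GTerm F, substG σ l = t ∧ u = some (substG σ r)) ∨
    (u = none ∧ ∀ σ : V → GTerm F, substG σ l ≠ t) := by
  cases h with
  | ruleOk σ => exact Or.inl ⟨σ, rfl, rfl⟩
  | ruleFail hne => exact Or.inr ⟨rfl, hne⟩

theorem eval_one_inv {F V X : Type} [DecidableEq X]
    {Γ : Ctx F V X} {s : Strat F V X} {t : GTerm F} {u : Option (GTerm F)}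
    (h : Eval Γ (.one s) t u) :
    (∃ f pre tm post tm', t = GTerm.node f (pre ++ tm :: post) ∧
      u = some (GTerm.node f (pre ++ tm' :: post)) ∧
      (∀ p ∈ pre, Eval Γ s p none) ∧ Eval Γ s tm (some tm')) ∨
    (∃ f ts, t = GTerm.node f ts ∧ u = none ∧ ∀ x ∈ ts, Eval Γ s x none) := by
  cases h with
  | oneOk hpre ht => exact Or.inl ⟨_, _, _, _, _, rfl, rfl, hpre, ht⟩
  | oneFail hall => exact Or.inr ⟨_, _, rfl, rfl, hall⟩

theorem eval_deterministic {F V X : Type} [DecidableEq X]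
    (Γ : Ctx F V X) (S : Strat F V X) (t : GTerm F)
    (u u' : Option (GTerm F)) (h : Eval Γ S t u) (h' : Eval Γ S t u') :
    u = u' := by
  induction h generalizing u' with
  | id => cases h'; rfl
  | fail => cases h'; rfl
  | @ruleOk _ l r wf σ =>
    rcases eval_rule_inv h' with ⟨σ', heq, rfl⟩ | ⟨rfl, hne⟩
    · have hag := substG_agree l heq
      have : substG σ' r = substG σ r := substG_congr r (fun v hv => hag v (wf v hv))
      rw [this]
    · exact absurd rfl (hne σ)
  | ruleFail hne =>
    rcases eval_rule_inv h' with ⟨σ', heq, rfl⟩ | ⟨rfl, _⟩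
    · exact absurd heq (hne σ')
    · rfl
  | seqOk h1 h2 ih1 ih2 =>
    cases h' with
    | seqOk h1' h2' =>
      have := ih1 _ h1'; injection this with he; subst he; exact ih2 _ h2'
    | seqFail h1' => exact absurd (ih1 _ h1') (by simp)
  | seqFail h1 ih1 =>
    cases h' with
    | seqOk h1' h2' => exact absurd (ih1 _ h1') (by simp)
    | seqFail => rfl
  | choiceOk h1 ih1 =>
    cases h' with
    | choiceOk h1' => exact ih1 _ h1'
    | choiceFail h1' _ => exact absurd (ih1 _ h1') (by simp)
  | choiceFail h1 h2 ih1 ih2 =>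
    cases h' with
    | choiceOk h1' => exact absurd (ih1 _ h1') (by simp)
    | choiceFail h1' h2' => exact ih2 _ h2'
  | mu h1 ih1 =>
    cases h' with
    | mu h1' => exact ih1 _ h1'
  | muvar hΓ h1 ih1 =>
    cases h' with
    | muvar hΓ' h1' =>
      rw [hΓ] at hΓ'
      injection hΓ' with he
      subst he
      exact ih1 _ h1'
  | @oneOk _ s f pre tm post tm' hpre ht ihpre iht =>
    rcases eval_one_inv h' with
      ⟨f', pre', tm2, post', tm2', heq, rfl, hpre', ht'⟩ | ⟨f', ts, heq, rfl, hall⟩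
    · injection heq with hf hl
      subst hf
      rcases append_cons_cases _ _ _ _ _ _ hl with ⟨h1, h2, h3⟩ | hx | hy
      · subst h1; subst h2; subst h3
        have := iht _ ht'
        injection this with he
        rw [he]
      · exact absurd (iht _ (hpre' _ hx)) (by simp)
      · exact absurd ((ihpre _ hy) _ ht') (by simp)
    · injection heq with hf hl
      subst hl
      exact absurd (iht _ (hall tm (by simp))) (by simp)
  | oneFail hall ihall =>
    rcases eval_one_inv h' with
      ⟨f', pre', tm2, post', tm2', heq, rfl, hpre', ht'⟩ | ⟨f', ts2, heq, rfl, _⟩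
    · injection heq with hf hl
      subst hl
      exact absurd (ihall tm2 (by simp) _ ht') (by simp)
    · rfl
  | @allOk _ s f ts ts' hlen hall ihall =>
    cases h' with
    | @allOk _ _ _ _ ts'' hlen' hall' =>
      have hts : ts' = ts'' := by
        apply List.ext_getElem (by omega)
        intro i hi1 hi2
        have hti : i < ts.length := by omega
        have hz1 : i < (ts.zip ts').length := by
          rw [List.length_zip]; omega
        have hz2 : i < (ts.zip ts'').length := by
          rw [List.length_zip]; omega
        have hm1 : (ts[i], ts'[i]) ∈ ts.zip ts' := by
          have := List.getElem_mem hz1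
          rwa [List.getElem_zip] at this
        have hm2 : (ts[i], ts''[i]) ∈ ts.zip ts'' := by
          have := List.getElem_mem hz2
          rwa [List.getElem_zip] at this
        have := ihall (ts[i], ts'[i]) hm1 _ (hall' (ts[i], ts''[i]) hm2)
        exact Option.some.inj this
      rw [hts]
    | @allFail _ _ _ _ tt hm hn =>
      obtain ⟨b, hb⟩ := mem_zip_of_mem_left hm hlen
      exact absurd (ihall _ hb _ hn) (by simp)
  | @allFail _ s f ts tt hm hn ihn =>
    cases h' with
    | @allOk _ _ _ _ ts'' hlen' hall' =>
      obtain ⟨b, hb⟩ := mem_zip_of_mem_left hm hlen'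
      exact absurd (ihn _ (hall' (tt, b) hb)) (by simp)
    | allFail => rfl
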